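/- Let $E$ be a real normed vector space, $n \in \mathbb{N}$, $h > 0$, $T = nh$, and $D, G, L \ge 0$. Let $x : \mathbb{R} \to E$ be differentiable on $[0,T]$ with $\|x(t)\| \le D$ and $\|x'(t)\| \le D$ for all $t \in [0,T]$; let $u : \mathbb{R} \to E$ satisfy $\|u(t)\| \le D$ and $u(t) = u(ih)$ for every $i < n$ and $t \in [ih, (i+1)h)$. Let $c : \mathbb{R} \to E \to E \to \mathbb{R}$ satisfy: (i) for all $t$ and all $p, q, v$ with $\|p\|, \|q\|, \|v\| \le D$, $|c(t,p,v) - c(t,q,v)| \le G D\, \|p - q\|$; (ii) for all $t_1, t_2$ and all $p, v$ with $\|p\|, \|v\| \le D$, $|c(t_1,p,v) - c(t_2,p,v)| \le L |t_1 - t_2| D^2$. Assume $t \mapsto c(t, x(t), u(t))$ is integrable on $[0,T]$. Then $\Big| \int_0^{T} c(t, x(t), u(t))\, dt - h\sum_{i=0}^{n-1} c(ih, x(ih), u(ih)) \Big| \le \tfrac{1}{2}(G+L) D^2 h T$. -/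

import Mathlib

/-- Discretization-error lemma (bounding `R₀` for a single trajectory): the
continuous-time cumulative cost of a trajectory with bounded state, bounded state
derivative, and piecewise-constant control on sampling intervals of length `h` is
approximated by the Riemann sum of sampled costs with error at most
`½ (G+L) D² h T`. -/
theorem stmt7 {E : Type*} [NormedAddCommGroup E] [NormedSpace ℝ E]
    (n : ℕ) (h T D G L : ℝ) (hh : 0 < h) (hT : T = n * h)
    (hD : 0 ≤ D) (hG : 0 ≤ G) (hL : 0 ≤ L)
    (x xd u : ℝ → E) (c : ℝ → E → E → ℝ)
    (hx : ∀ t ∈ Set.Icc (0 : ℝ) T, HasDerivWithinAt x (xd t) (Set.Icc (0 : ℝ) T) t)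
    (hxb : ∀ t ∈ Set.Icc (0 : ℝ) T, ‖x t‖ ≤ D)
    (hxd : ∀ t ∈ Set.Icc (0 : ℝ) T, ‖xd t‖ ≤ D)
    (hub : ∀ t : ℝ, ‖u t‖ ≤ D)
    (huc : ∀ i < n, ∀ t ∈ Set.Ico ((i : ℝ) * h) (((i : ℝ) + 1) * h), u t = u ((i : ℝ) * h))
    (hc1 : ∀ (t : ℝ) (p q v : E), ‖p‖ ≤ D → ‖q‖ ≤ D → ‖v‖ ≤ D →
      |c t p v - c t q v| ≤ G * D * ‖p - q‖)
    (hc2 : ∀ (t1 t2 : ℝ) (p v : E), ‖p‖ ≤ D → ‖v‖ ≤ D →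
      |c t1 p v - c t2 p v| ≤ L * |t1 - t2| * D ^ 2)
    (hint : IntervalIntegrable (fun t => c t (x t) (u t)) MeasureTheory.volume 0 T) :
    |(∫ t in (0 : ℝ)..T, c t (x t) (u t)) -
        h * ∑ i ∈ Finset.range n, c ((i : ℝ) * h) (x ((i : ℝ) * h)) (u ((i : ℝ) * h))| ≤
      (1 / 2) * (G + L) * D ^ 2 * h * T := by
  set f : ℝ → ℝ := fun t => c t (x t) (u t) with hf
  set K : ℝ := (G + L) * D ^ 2 with hKdef
  have hK : 0 ≤ K := by positivity
  -- endpoints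
  have hbnd : ∀ i : ℕ, i ≤ n → (0 : ℝ) ≤ (i : ℝ) * h ∧ (i : ℝ) * h ≤ T := by
    intro i hi
    constructor
    · positivity
    · rw [hT]
      have : (i : ℝ) ≤ (n : ℝ) := by exact_mod_cast hi
      nlinarith
  -- integrability on subintervals
  have hsubint : ∀ i : ℕ, i < n →
      IntervalIntegrable f MeasureTheory.volume ((i : ℝ) * h) (((i : ℝ) + 1) * h) := by
    intro i hi
    apply hint.mono_set
    have h0 := hbnd i (le_of_lt hi)
    have h1 := hbnd (i + 1) hi
    push_cast at h1
    rw [Set.uIcc_of_le (by nlinarith), Set.uIcc_of_le (by rw [hT]; positivity)]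
    exact Set.Icc_subset_Icc h0.1 h1.2
  -- per-interval bound
  have hper : ∀ i : ℕ, i < n →
      |(∫ t in ((i : ℝ) * h)..(((i : ℝ) + 1) * h), f t) -
        h * c ((i : ℝ) * h) (x ((i : ℝ) * h)) (u ((i : ℝ) * h))| ≤ K * h ^ 2 / 2 := by
    intro i hi
    set a : ℝ := (i : ℝ) * h with hadef
    set b : ℝ := ((i : ℝ) + 1) * h with hbdef
    have hab : a ≤ b := by rw [hadef, hbdef]; nlinarith
    have hba : b - a = h := by rw [hadef, hbdef]; ring
    have haIcc : a ∈ Set.Icc (0 : ℝ) T := by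
      have h0 := hbnd i (le_of_lt hi); exact ⟨h0.1, h0.2⟩
    have hbT : b ≤ T := by
      have h1 := hbnd (i + 1) hi; push_cast at h1; rw [hbdef]; exact h1.2
    set C : ℝ := c a (x a) (u a) with hCdef
    have hconst : h * C = ∫ _ in a..b, C := by
      rw [intervalIntegral.integral_const, smul_eq_mul, hba]
    have hdiff : (∫ t in a..b, f t) - h * C = ∫ t in a..b, (f t - C) := by
      rw [hconst, ← intervalIntegral.integral_sub (hsubint i hi) intervalIntegrable_const]
    rw [hdiff]
    have hbound : ∀ᵐ t ∂MeasureTheory.volume.restrict (Set.uIoc a b),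
        ‖f t - C‖ ≤ K * (t - a) := by
      have hmem : ∀ᵐ t ∂MeasureTheory.volume.restrict (Set.uIoc a b), t ∈ Set.uIoc a b :=
        MeasureTheory.ae_restrict_mem measurableSet_uIoc
      have hne : ∀ᵐ t : ℝ ∂MeasureTheory.volume, t ≠ b := by
        have : MeasureTheory.volume ({b} : Set ℝ) = 0 := MeasureTheory.measure_singleton b
        rw [MeasureTheory.ae_iff]
        simpa using this
      filter_upwards [hmem, MeasureTheory.ae_restrict_of_ae hne] with t ht htb
      rw [Set.uIoc_of_le hab] at ht
      have htIco : t ∈ Set.Ico a b := ⟨le_of_lt ht.1, lt_of_le_of_ne ht.2 htb⟩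
      have htIcc : t ∈ Set.Icc (0 : ℝ) T := ⟨le_trans haIcc.1 (le_of_lt ht.1), le_trans ht.2 hbT⟩
      have hut : u t = u a := huc i hi t htIco
      have hxdist : ‖x t - x a‖ ≤ D * (t - a) := by
        have := (convex_Icc (0 : ℝ) T).norm_image_sub_le_of_norm_hasDerivWithin_le
          (f := x) (f' := xd) (C := D) hx hxd haIcc htIcc
        calc ‖x t - x a‖ ≤ D * ‖t - a‖ := this
          _ = D * (t - a) := by rw [Real.norm_eq_abs, abs_of_nonneg (by linarith [ht.1])]
      have h1 : |c t (x t) (u t) - c t (x a) (u t)| ≤ G * D * (D * (t - a)) := by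
        calc |c t (x t) (u t) - c t (x a) (u t)| ≤ G * D * ‖x t - x a‖ :=
              hc1 t (x t) (x a) (u t) (hxb t htIcc) (hxb a haIcc) (hub t)
          _ ≤ G * D * (D * (t - a)) := by
              apply mul_le_mul_of_nonneg_left hxdist (by positivity)
      have h2 : |c t (x a) (u t) - c a (x a) (u a)| ≤ L * (t - a) * D ^ 2 := by
        rw [hut]
        calc |c t (x a) (u a) - c a (x a) (u a)| ≤ L * |t - a| * D ^ 2 :=
              hc2 t a (x a) (u a) (hxb a haIcc) (hub a)
          _ = L * (t - a) * D ^ 2 := by rw [abs_of_nonneg (by linarith [ht.1])]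
      have : ‖f t - C‖ = |c t (x t) (u t) - c a (x a) (u a)| := rfl
      rw [this]
      calc |c t (x t) (u t) - c a (x a) (u a)|
          ≤ |c t (x t) (u t) - c t (x a) (u t)| + |c t (x a) (u t) - c a (x a) (u a)| := by
            have := abs_sub_abs_le_abs_sub (c t (x t) (u t)) (c a (x a) (u a))
            exact (abs_sub_le _ _ _)
        _ ≤ G * D * (D * (t - a)) + L * (t - a) * D ^ 2 := add_le_add h1 h2
        _ = K * (t - a) := by rw [hKdef]; ring
    have hgint : IntervalIntegrable (fun t => K * (t - a)) MeasureTheory.volume a b := by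
      apply Continuous.intervalIntegrable; continuity
    have hgval : (∫ t in a..b, K * (t - a)) = K * h ^ 2 / 2 := by
      rw [intervalIntegral.integral_const_mul,
        intervalIntegral.integral_sub intervalIntegral.intervalIntegrable_id
          intervalIntegrable_const, integral_id, intervalIntegral.integral_const,
        smul_eq_mul]
      have hbe : b = a + h := by linarith
      rw [hbe]; ring
    have hfin := intervalIntegral.norm_integral_le_of_norm_le hab
      (by rw [Set.uIoc_of_le hab] at hbound; exact (MeasureTheory.ae_restrict_iff' measurableSet_Ioc).mp hbound) hgint
    rw [hgval] at hfin
    rw [← Real.norm_eq_abs]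
    exact hfin
  -- sum of integrals
  have hsum : ∑ i ∈ Finset.range n,
      (∫ t in ((i : ℝ) * h)..(((i : ℝ) + 1) * h), f t) = ∫ t in (0 : ℝ)..T, f t := by
    have hint' : ∀ k < n, IntervalIntegrable f MeasureTheory.volume
        ((fun i : ℕ => (i : ℝ) * h) k) ((fun i : ℕ => (i : ℝ) * h) (k + 1)) := by
      intro k hk
      have := hsubint k hk
      simpa [push_cast] using (by push_cast; exact this :
        IntervalIntegrable f MeasureTheory.volume ((k : ℝ) * h) (((k : ℕ) + 1 : ℕ) * h))
    have := intervalIntegral.sum_integral_adjacent_intervals (a := fun i : ℕ => (i : ℝ) * h)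
      (n := n) hint'
    simp only [Nat.cast_zero, zero_mul] at this
    rw [← hT] at this
    rw [← this]
    apply Finset.sum_congr rfl
    intro i _
    norm_num
  rw [← hsum, Finset.mul_sum, ← Finset.sum_sub_distrib]
  calc |∑ i ∈ Finset.range n, ((∫ t in ((i : ℝ) * h)..(((i : ℝ) + 1) * h), f t) -
          h * c ((i : ℝ) * h) (x ((i : ℝ) * h)) (u ((i : ℝ) * h)))|
      ≤ ∑ i ∈ Finset.range n, |(∫ t in ((i : ℝ) * h)..(((i : ℝ) + 1) * h), f t) -
          h * c ((i : ℝ) * h) (x ((i : ℝ) * h)) (u ((i : ℝ) * h))| :=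
        Finset.abs_sum_le_sum_abs _ _
    _ ≤ ∑ _i ∈ Finset.range n, K * h ^ 2 / 2 :=
        Finset.sum_le_sum fun i hi => hper i (Finset.mem_range.mp hi)
    _ = (n : ℝ) * (K * h ^ 2 / 2) := by rw [Finset.sum_const, Finset.card_range, nsmul_eq_mul]
    _ = (1 / 2) * (G + L) * D ^ 2 * h * T := by rw [hT, hKdef]; ring
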